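/- Let τ : W → X, φ : X → Y, ψ : Y → Z be wiring diagrams. Both composites (ψ ∘ φ) ∘ τ and ψ ∘ (φ ∘ τ) are wiring diagrams W → Z whose demand and supply wire sets are Out Z ⊔ In W ⊔ D_τ ⊔ D_φ ⊔ D_ψ and In Z ⊔ Out W ⊔ D_τ ⊔ D_φ ⊔ D_ψ respectively (up to the canonical associativity bijections of disjoint unions), and under these canonical bijections their supplier assignments are equal: s_{(ψ∘φ)∘τ} = s_{ψ∘(φ∘τ)}. -/
import Mathlib


universe u

variable {InW OutW InX OutX InY OutY InZ OutZ Dτ Dφ Dψ : Type u}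

/-- The map `f_{ψ,φ} : Sup(ψ) → Sup(ψ∘φ)`, the identity on `In Z` and `D_ψ`, and
equal to `s_φ|_{Out Y}` (landing in `Out X ⊔ D_φ` by non-instantaneity, encoded by
`sφOut`) on `Out Y`. -/
def fMap (sφOut : OutY → OutX ⊕ Dφ) :
    InZ ⊕ OutY ⊕ Dψ → InZ ⊕ OutX ⊕ Dφ ⊕ Dψ
  | Sum.inl z => Sum.inl z
  | Sum.inr (Sum.inl o) =>
      match sφOut o with
      | Sum.inl x => Sum.inr (Sum.inl x)
      | Sum.inr d => Sum.inr (Sum.inr (Sum.inl d))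
  | Sum.inr (Sum.inr d) => Sum.inr (Sum.inr (Sum.inr d))

/-- The map `h_{ψ,φ} : Sup(φ) → Sup(ψ∘φ)`, equal to `f_{ψ,φ} ∘ s_ψ|_{In Y}` on
`In Y` and the identity on `Out X` and `D_φ`. -/
def hMap (sψ : OutZ ⊕ InY ⊕ Dψ → InZ ⊕ OutY ⊕ Dψ) (sφOut : OutY → OutX ⊕ Dφ) :
    InY ⊕ OutX ⊕ Dφ → InZ ⊕ OutX ⊕ Dφ ⊕ Dψ
  | Sum.inl i => fMap sφOut (sψ (Sum.inr (Sum.inl i)))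
  | Sum.inr (Sum.inl x) => Sum.inr (Sum.inl x)
  | Sum.inr (Sum.inr d) => Sum.inr (Sum.inr (Sum.inl d))

/-- The supplier assignment of the composite wiring diagram `ψ ∘ φ`, with delay set
`D_φ ⊔ D_ψ`: it equals `h_{ψ,φ} ∘ s_φ` on `In X ⊔ D_φ` and `f_{ψ,φ} ∘ s_ψ` on
`Out Z ⊔ D_ψ`. -/
def compS (sφ : OutY ⊕ InX ⊕ Dφ → InY ⊕ OutX ⊕ Dφ)
    (sψ : OutZ ⊕ InY ⊕ Dψ → InZ ⊕ OutY ⊕ Dψ) (sφOut : OutY → OutX ⊕ Dφ) :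
    OutZ ⊕ InX ⊕ Dφ ⊕ Dψ → InZ ⊕ OutX ⊕ Dφ ⊕ Dψ
  | Sum.inl z => fMap sφOut (sψ (Sum.inl z))
  | Sum.inr (Sum.inl i) => hMap sψ sφOut (sφ (Sum.inr (Sum.inl i)))
  | Sum.inr (Sum.inr (Sum.inl d)) => hMap sψ sφOut (sφ (Sum.inr (Sum.inr d)))
  | Sum.inr (Sum.inr (Sum.inr d)) => fMap sφOut (sψ (Sum.inr (Sum.inr d)))

/-- The restriction of `f_{ψ,φ}` to `Out Y ⊔ D_ψ`, landing in the internal supplies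
`Out X ⊔ D_φ ⊔ D_ψ` of the composite. -/
def fMapOut (sφOut : OutY → OutX ⊕ Dφ) : OutY ⊕ Dψ → OutX ⊕ Dφ ⊕ Dψ
  | Sum.inl o =>
      match sφOut o with
      | Sum.inl x => Sum.inl x
      | Sum.inr d => Sum.inr (Sum.inl d)
  | Sum.inr d => Sum.inr (Sum.inr d)

/-- The non-instantaneity witness for the composite `ψ ∘ φ`. -/
def compSOut (sψOut : OutZ → OutY ⊕ Dψ) (sφOut : OutY → OutX ⊕ Dφ) :
    OutZ → OutX ⊕ Dφ ⊕ Dψ :=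
  fun z => fMapOut sφOut (sψOut z)

/-- The canonical associativity bijection on delay nodes. -/
def reD : Dτ ⊕ Dφ ⊕ Dψ → (Dτ ⊕ Dφ) ⊕ Dψ
  | Sum.inl d => Sum.inl (Sum.inl d)
  | Sum.inr (Sum.inl d) => Sum.inl (Sum.inr d)
  | Sum.inr (Sum.inr d) => Sum.inr d

/-- **Associativity of composition of wiring diagrams.**  For wiring diagrams
`τ : W → X`, `φ : X → Y`, `ψ : Y → Z`, the composites `(ψ∘φ)∘τ` and `ψ∘(φ∘τ)` are
wiring diagrams `W → Z` (they satisfy non-instantaneity, with the indicated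
witnesses), their demand and supply wire sets are
`Out Z ⊔ In W ⊔ D_τ ⊔ D_φ ⊔ D_ψ` and `In Z ⊔ Out W ⊔ D_τ ⊔ D_φ ⊔ D_ψ` up to the
canonical associativity bijections of disjoint unions, and under these canonical
bijections their supplier assignments are equal. -/
theorem comp_assoc_supplier
    [Fintype InW] [Fintype OutW] [Fintype InX] [Fintype OutX] [Fintype InY]
    [Fintype OutY] [Fintype InZ] [Fintype OutZ]
    [Fintype Dτ] [Fintype Dφ] [Fintype Dψ]
    (sτ : OutX ⊕ InW ⊕ Dτ → InX ⊕ OutW ⊕ Dτ)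
    (sτOut : OutX → OutW ⊕ Dτ)
    (hτ : ∀ x : OutX, sτ (Sum.inl x) = Sum.inr (sτOut x))
    (sφ : OutY ⊕ InX ⊕ Dφ → InY ⊕ OutX ⊕ Dφ)
    (sφOut : OutY → OutX ⊕ Dφ)
    (hφ : ∀ y : OutY, sφ (Sum.inl y) = Sum.inr (sφOut y))
    (sψ : OutZ ⊕ InY ⊕ Dψ → InZ ⊕ OutY ⊕ Dψ)
    (sψOut : OutZ → OutY ⊕ Dψ)
    (hψ : ∀ z : OutZ, sψ (Sum.inl z) = Sum.inr (sψOut z)) :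
    -- (ψ∘φ)∘τ satisfies non-instantaneity
    (∀ z : OutZ,
      compS sτ (compS sφ sψ sφOut) sτOut (Sum.inl z)
        = Sum.inr (compSOut (compSOut sψOut sφOut) sτOut z)) ∧
    -- ψ∘(φ∘τ) satisfies non-instantaneity
    (∀ z : OutZ,
      compS (compS sτ sφ sτOut) sψ (compSOut sφOut sτOut) (Sum.inl z)
        = Sum.inr (compSOut sψOut (compSOut sφOut sτOut) z)) ∧
    -- and the two supplier assignments agree up to the canonical reassociations
    (Sum.map id (Sum.map id reD) ∘
        compS sτ (compS sφ sψ sφOut) sτOut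
      = compS (compS sτ sφ sτOut) sψ (compSOut sφOut sτOut) ∘
          Sum.map id (Sum.map id reD)) := by
  refine ⟨?_, ?_, ?_⟩
  · intro z
    simp only [compS, compSOut, fMap, fMapOut, hψ]
    rcases sψOut z with y | d
    · simp only []
      rcases sφOut y with x | d
      · simp only []
        rcases sτOut x with w | d <;> rfl
      · rfl
    · rfl
  · intro z
    simp only [compS, compSOut, fMap, fMapOut, hψ]
    rcases sψOut z with y | d
    · simp only []
      rcases sφOut y with x | d
      · simp only []
        rcases sτOut x with w | d <;> rfl
      · rfl
    · rfl
  · funext a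
    rcases a with z | i | dτ | dφ | dψ <;>
      simp only [Function.comp_apply, Sum.map_inl, Sum.map_inr, id_eq, compS, compSOut, fMap,
        fMapOut, hMap, reD, hψ, hφ, hτ]
    · rcases sψOut z with y | d
      · simp only [Sum.map_inl, Sum.map_inr, id_eq, compS, compSOut, fMap, fMapOut, hMap, reD, hψ, hφ, hτ]
        rcases sφOut y with x | d
        · simp only [Sum.map_inl, Sum.map_inr, id_eq, compS, compSOut, fMap, fMapOut, hMap, reD, hψ, hφ, hτ]
          rcases sτOut x with w | d <;> rfl
        · rfl
      · rfl
    · rcases sτ (Sum.inr (Sum.inl i)) with x | w | d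
      · simp only [Sum.map_inl, Sum.map_inr, id_eq, compS, compSOut, fMap, fMapOut, hMap, reD, hψ, hφ, hτ]
        rcases sφ (Sum.inr (Sum.inl x)) with i' | x' | d
        · simp only [Sum.map_inl, Sum.map_inr, id_eq, compS, compSOut, fMap, fMapOut, hMap, reD, hψ, hφ, hτ]
          rcases sψ (Sum.inr (Sum.inl i')) with z' | y | d
          · rfl
          · simp only [Sum.map_inl, Sum.map_inr, id_eq, compS, compSOut, fMap, fMapOut, hMap, reD, hψ, hφ, hτ]
            rcases sφOut y with x'' | d
            · simp only [Sum.map_inl, Sum.map_inr, id_eq, compS, compSOut, fMap, fMapOut, hMap, reD, hψ, hφ, hτ]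
              rcases sτOut x'' with w | d <;> rfl
            · rfl
          · rfl
        · simp only [Sum.map_inl, Sum.map_inr, id_eq, compS, compSOut, fMap, fMapOut, hMap, reD, hψ, hφ, hτ]
          rcases sτOut x' with w | d <;> rfl
        · rfl
      · rfl
      · rfl
    · rcases sτ (Sum.inr (Sum.inr dτ)) with x | w | d
      · simp only [Sum.map_inl, Sum.map_inr, id_eq, compS, compSOut, fMap, fMapOut, hMap, reD, hψ, hφ, hτ]
        rcases sφ (Sum.inr (Sum.inl x)) with i' | x' | d
        · simp only [Sum.map_inl, Sum.map_inr, id_eq, compS, compSOut, fMap, fMapOut, hMap, reD, hψ, hφ, hτ]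
          rcases sψ (Sum.inr (Sum.inl i')) with z' | y | d
          · rfl
          · simp only [Sum.map_inl, Sum.map_inr, id_eq, compS, compSOut, fMap, fMapOut, hMap, reD, hψ, hφ, hτ]
            rcases sφOut y with x'' | d
            · simp only [Sum.map_inl, Sum.map_inr, id_eq, compS, compSOut, fMap, fMapOut, hMap, reD, hψ, hφ, hτ]
              rcases sτOut x'' with w | d <;> rfl
            · rfl
          · rfl
        · simp only [Sum.map_inl, Sum.map_inr, id_eq, compS, compSOut, fMap, fMapOut, hMap, reD, hψ, hφ, hτ]
          rcases sτOut x' with w | d <;> rfl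
        · rfl
      · rfl
      · rfl
    · rcases sφ (Sum.inr (Sum.inr dφ)) with i' | x' | d
      · simp only [Sum.map_inl, Sum.map_inr, id_eq, compS, compSOut, fMap, fMapOut, hMap, reD, hψ, hφ, hτ]
        rcases sψ (Sum.inr (Sum.inl i')) with z' | y | d
        · rfl
        · simp only [Sum.map_inl, Sum.map_inr, id_eq, compS, compSOut, fMap, fMapOut, hMap, reD, hψ, hφ, hτ]
          rcases sφOut y with x'' | d
          · simp only [Sum.map_inl, Sum.map_inr, id_eq, compS, compSOut, fMap, fMapOut, hMap, reD, hψ, hφ, hτ]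
            rcases sτOut x'' with w | d <;> rfl
          · rfl
        · rfl
      · simp only [Sum.map_inl, Sum.map_inr, id_eq, compS, compSOut, fMap, fMapOut, hMap, reD, hψ, hφ, hτ]
        rcases sτOut x' with w | d <;> rfl
      · rfl
    · rcases sψ (Sum.inr (Sum.inr dψ)) with z' | y | d
      · rfl
      · simp only [Sum.map_inl, Sum.map_inr, id_eq, compS, compSOut, fMap, fMapOut, hMap, reD, hψ, hφ, hτ]
        rcases sφOut y with x'' | d
        · simp only [Sum.map_inl, Sum.map_inr, id_eq, compS, compSOut, fMap, fMapOut, hMap, reD, hψ, hφ, hτ]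
          rcases sτOut x'' with w | d <;> rfl
        · rfl
      · rfl
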